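/- arXiv:2202.07902 — 2 statements merged into one kernel-verified Lean document; each statement's English description precedes it below -/
import Mathlib

section
/- For all real x and y ∈ {0,1}, letting ψ(x) = min(max(x,-1),1) be the clamp of x to [-1,1], and letting 𝟙_S(x,y) be the indicator of the set S = {(x,y) : (x < -1 and y = 1) or (x > 1 and y = 0)}, we have (1/(1+e^x) - y)^2 ≥ 1/4 - (1-2y)ψ(x)/4 + ψ(x)^2/16 - |ψ(x)|^3/48 - |ψ(x)|^4/96 - 𝟙_S(x,y)/(1+e)^2. -/
open scoped Classical

noncomputable def clamp (x : ℝ) : ℝ := min (max x (-1)) 1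

lemma exp_upper (x : ℝ) (h0 : 0 ≤ x) (h1 : x ≤ 1) :
    Real.exp x ≤ 1 + x + x ^ 2 / 2 + x ^ 3 / 6 + 5 * x ^ 4 / 96 := by
  have := Real.exp_bound' h0 h1 (n := 4) (by norm_num)
  simp [Finset.sum_range_succ, Nat.factorial] at this
  linarith

lemma exp_lower (x : ℝ) (h0 : 0 ≤ x) :
    1 + x + x ^ 2 / 2 + x ^ 3 / 6 + x ^ 4 / 24 ≤ Real.exp x := by
  have := Real.sum_le_exp_of_nonneg h0 5
  simp [Finset.sum_range_succ, Nat.factorial] at this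
  linarith

lemma half_lemma (x : ℝ) :
    (1 / (1 + Real.exp x)) ^ 2 ≥
      1 / 4 - clamp x / 4 + (clamp x) ^ 2 / 16
        - |clamp x| ^ 3 / 48 - |clamp x| ^ 4 / 96
        - (if 1 < x then (1 : ℝ) else 0) / (1 + Real.exp 1) ^ 2 := by
  have hex : 0 < Real.exp x := Real.exp_pos x
  have hden : 0 < 1 + Real.exp x := by linarith
  have he1 : (2.7182818283 : ℝ) < Real.exp 1 := Real.exp_one_gt_d9
  have he2 : Real.exp 1 < 2.7182818286 := Real.exp_one_lt_d9
  rcases lt_or_ge 1 x with hgt | hle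
  · -- x > 1 : RHS negative
    have hc : clamp x = 1 := by
      unfold clamp
      rw [max_eq_left (by linarith), min_eq_right (by linarith)]
    rw [hc, if_pos hgt, abs_one]
    have hsq : 0 ≤ (1 / (1 + Real.exp x)) ^ 2 := sq_nonneg _
    have hpos : (0:ℝ) < (1 + Real.exp 1) ^ 2 := by positivity
    have h32 : (1:ℝ) / 32 ≤ 1 / (1 + Real.exp 1) ^ 2 := by
      rw [div_le_div_iff₀ (by norm_num) hpos]
      nlinarith
    linarith
  rcases lt_or_ge x (-1) with hlt | hge
  · -- x < -1
    have hc : clamp x = -1 := by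
      unfold clamp
      rw [max_eq_right (by linarith), min_eq_left (by norm_num)]
    rw [hc, if_neg (by linarith), abs_neg, abs_one]
    have hxe : Real.exp x < Real.exp (-1) := Real.exp_lt_exp.2 (by linarith)
    have hinv : Real.exp (-1) = 1 / Real.exp 1 := by
      rw [Real.exp_neg]; ring
    have hsig : Real.exp 1 / (1 + Real.exp 1) ≤ 1 / (1 + Real.exp x) := by
      rw [div_le_div_iff₀ (by positivity) hden]
      have : Real.exp x * Real.exp 1 < 1 := by
        rw [hinv] at hxe
        calc Real.exp x * Real.exp 1 < (1 / Real.exp 1) * Real.exp 1 :=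
              mul_lt_mul_of_pos_right hxe (Real.exp_pos 1)
          _ = 1 := by field_simp
      nlinarith
    have hpos2 : (0:ℝ) < Real.exp 1 / (1 + Real.exp 1) := by positivity
    have hsq : (Real.exp 1 / (1 + Real.exp 1)) ^ 2 ≤ (1 / (1 + Real.exp x)) ^ 2 :=
      pow_le_pow_left₀ (le_of_lt hpos2) hsig 2
    have key : (17 : ℝ) / 32 ≤ (Real.exp 1 / (1 + Real.exp 1)) ^ 2 := by
      rw [div_pow, le_div_iff₀ (by positivity)]
      nlinarith [sq_nonneg (Real.exp 1 - 2.7182818283)]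
    simp only [zero_div]
    linarith
  · -- -1 ≤ x ≤ 1
    have hc : clamp x = x := by
      unfold clamp
      rw [max_eq_left hge, min_eq_left hle]
    rw [hc, if_neg (not_lt.2 hle)]
    simp only [zero_div]
    rcases le_or_gt 0 x with hx0 | hx0
    · -- 0 ≤ x ≤ 1
      have hub := exp_upper x hx0 hle
      rw [abs_of_nonneg hx0]
      have hsig : 1 / 2 - x / 4 ≤ 1 / (1 + Real.exp x) := by
        rw [le_div_iff₀ hden]
        nlinarith [mul_le_mul_of_nonneg_left hub (show (0:ℝ) ≤ 1/2 - x/4 by linarith),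
          pow_nonneg hx0 3, pow_nonneg hx0 4, pow_nonneg hx0 5]
      have hgp : (0:ℝ) < 1 / 2 - x / 4 := by linarith
      have hsq : (1 / 2 - x / 4) ^ 2 ≤ (1 / (1 + Real.exp x)) ^ 2 :=
        pow_le_pow_left₀ (le_of_lt hgp) hsig 2
      nlinarith [pow_nonneg hx0 3, pow_nonneg hx0 4]
    · -- -1 ≤ x < 0
      obtain ⟨u, rfl⟩ : ∃ u, x = -u := ⟨-x, by ring⟩
      have hu0 : 0 ≤ u := by linarith
      have hu1 : u ≤ 1 := by linarith
      have hlb := exp_lower u hu0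
      have heu : 0 < Real.exp u := Real.exp_pos u
      rw [show |(-u)| = u by rw [abs_neg, abs_of_nonneg hu0]]
      have hrw : (1:ℝ) / (1 + Real.exp (-u)) = Real.exp u / (Real.exp u + 1) := by
        rw [Real.exp_neg]
        field_simp
      have key : (24 + 12 * u - u ^ 3) ≤ Real.exp u * (24 - 12 * u + u ^ 3) := by
        nlinarith [mul_le_mul_of_nonneg_right hlb
            (show (0:ℝ) ≤ 24 - 12 * u + u ^ 3 by nlinarith [pow_le_one₀ hu0 hu1 (n := 3)]),
          pow_nonneg hu0 6, pow_nonneg hu0 7]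
      have hsig : 1 / 2 + u / 4 - u ^ 3 / 48 ≤ 1 / (1 + Real.exp (-u)) := by
        rw [hrw, le_div_iff₀ (by linarith)]
        nlinarith [key]
      have hgp : (0:ℝ) < 1 / 2 + u / 4 - u ^ 3 / 48 := by
        nlinarith [pow_le_one₀ hu0 hu1 (n := 3)]
      have hsq : (1 / 2 + u / 4 - u ^ 3 / 48) ^ 2 ≤ (1 / (1 + Real.exp (-u))) ^ 2 :=
        pow_le_pow_left₀ (le_of_lt hgp) hsig 2
      nlinarith [hsq, pow_nonneg hu0 6]

theorem sigmoid_sq_error_lower_bound (x y : ℝ) (hy : y = 0 ∨ y = 1) :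
    (1 / (1 + Real.exp x) - y) ^ 2 ≥
      1 / 4 - (1 - 2 * y) * clamp x / 4 + (clamp x) ^ 2 / 16
        - |clamp x| ^ 3 / 48 - |clamp x| ^ 4 / 96
        - (if (x < -1 ∧ y = 1) ∨ (1 < x ∧ y = 0) then (1 : ℝ) else 0)
            / (1 + Real.exp 1) ^ 2 := by
  rcases hy with h0 | h1
  · subst h0
    have h := half_lemma x
    have hiff : ((x < -1 ∧ (0:ℝ) = 1) ∨ (1 < x ∧ (0:ℝ) = 0)) ↔ 1 < x := by norm_num
    rw [if_congr hiff rfl rfl]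
    nlinarith [h]
  · subst h1
    have h := half_lemma (-x)
    have hflip : (1 / (1 + Real.exp x) - 1) ^ 2 = (1 / (1 + Real.exp (-x))) ^ 2 := by
      have h1 : Real.exp x ≠ 0 := (Real.exp_pos x).ne'
      have h2 : (1:ℝ) + Real.exp x ≠ 0 := by positivity
      have h3 : (1:ℝ) + Real.exp (-x) ≠ 0 := by positivity
      rw [Real.exp_neg] at h3 ⊢
      field_simp
      ring
    have hcl : clamp (-x) = - clamp x := by
      unfold clamp
      simp only [min_def, max_def]
      split_ifs <;> linarith
    have hiff : ((x < -1 ∧ (1:ℝ) = 1) ∨ (1 < x ∧ (1:ℝ) = 0)) ↔ 1 < -x := by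
      constructor
      · rintro (⟨hh, -⟩ | ⟨-, hh⟩)
        · linarith
        · norm_num at hh
      · intro hh
        exact Or.inl ⟨by linarith, rfl⟩
    rw [if_congr hiff rfl rfl, hflip]
    rw [hcl, abs_neg] at h
    nlinarith [h]
end

section
/- With A, D, P, Ã as above and Y ∈ {0,1}^{n×K} a label indicator matrix with R = YᵀY diagonal and invertible, define Π^k = R⁻¹Yᵀ P^k Y and Π̃^k = R^{-1/2}Yᵀ Ã^k Y R^{-1/2}. Then for all classes l, m: R_{ll}Π^k_{lm} + R_{mm}Π^k_{ml} ≥ 2√(R_{ll}R_{mm}) Π̃^k_{lm}; in particular, taking l = m, π_l^k ≥ π̃_l^k (the diagonal entries satisfy Π^k_{ll} ≥ Π̃^k_{ll}). -/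
open Matrix Finset

theorem interaction_probability_inequality {n K : ℕ}
    (A : Matrix (Fin n) (Fin n) ℝ) (hsym : A.IsSymm) (hnn : ∀ i j, 0 ≤ A i j)
    (d : Fin n → ℝ) (hd : ∀ i, d i = ∑ j, A i j) (hdpos : ∀ i, 0 < d i)
    (P At : Matrix (Fin n) (Fin n) ℝ)
    (hP : P = Matrix.diagonal (fun i => (d i)⁻¹) * A)
    (hAt : At = Matrix.diagonal (fun i => (Real.sqrt (d i))⁻¹) * A *
      Matrix.diagonal (fun i => (Real.sqrt (d i))⁻¹))
    (c : Fin n → Fin K) (hc : Function.Surjective c)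
    (y : Fin K → Fin n → ℝ) (hy : ∀ l i, y l i = if c i = l then 1 else 0)
    (R : Fin K → ℝ) (hR : ∀ l, R l = ∑ i, y l i * y l i)
    (k : ℕ) (hk : 0 < k)
    (Pi Pit : Fin K → Fin K → ℝ)
    (hPi : ∀ l m, Pi l m = (y l ⬝ᵥ (P ^ k).mulVec (y m)) / R l)
    (hPit : ∀ l m, Pit l m = (y l ⬝ᵥ (At ^ k).mulVec (y m)) / Real.sqrt (R l * R m)) :
    (∀ l m, R l * Pi l m + R m * Pi m l ≥ 2 * Real.sqrt (R l * R m) * Pit l m) ∧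
    (∀ l, Pi l l ≥ Pit l l) := by
  have hsd : ∀ i, 0 < Real.sqrt (d i) := fun i => Real.sqrt_pos.2 (hdpos i)
  have hynn : ∀ l i, 0 ≤ y l i := by
    intro l i; rw [hy]; split <;> norm_num
  -- positivity of R
  have hRpos : ∀ l, 0 < R l := by
    intro l
    obtain ⟨i, hi⟩ := hc l
    rw [hR]
    have h0 : (0:ℝ) < y l i * y l i := by rw [hy, if_pos hi]; norm_num
    calc (0:ℝ) < y l i * y l i := h0
      _ ≤ ∑ j, y l j * y l j := by
          apply Finset.single_le_sum (f := fun j => y l j * y l j)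
          · intro j _; exact mul_nonneg (hynn l j) (hynn l j)
          · exact Finset.mem_univ i
  -- diagonal matrices
  set S := Matrix.diagonal (fun i => Real.sqrt (d i)) with hS
  set Si := Matrix.diagonal (fun i => (Real.sqrt (d i))⁻¹) with hSi
  have hSiS : Si * S = 1 := by
    rw [hSi, hS, Matrix.diagonal_mul_diagonal]
    rw [show (fun i => (Real.sqrt (d i))⁻¹ * Real.sqrt (d i)) = fun _ => (1:ℝ) from
      funext fun i => inv_mul_cancel₀ (hsd i).ne', Matrix.diagonal_one]
  have hSSi : S * Si = 1 := by
    rw [hS, hSi, Matrix.diagonal_mul_diagonal]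
    rw [show (fun i => Real.sqrt (d i) * (Real.sqrt (d i))⁻¹) = fun _ => (1:ℝ) from
      funext fun i => mul_inv_cancel₀ (hsd i).ne', Matrix.diagonal_one]
  have hPconj : P = Si * At * S := by
    have e1 : Si * (Si * A * Si) * S = Si * Si * A * (Si * S) := by noncomm_ring
    rw [hAt, e1, hSiS, mul_one, hP, hSi, Matrix.diagonal_mul_diagonal]
    have e3 : (fun i => (Real.sqrt (d i))⁻¹ * (Real.sqrt (d i))⁻¹) = fun i => (d i)⁻¹ :=
      funext fun i => by rw [← mul_inv, Real.mul_self_sqrt (hdpos i).le]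
    rw [e3]
  have hconj : ∀ j : ℕ, P ^ j = Si * At ^ j * S := by
    intro j
    induction j with
    | zero => simp [hSiS]
    | succ j ih =>
        rw [pow_succ, pow_succ, ih, hPconj]
        have e2 : Si * At ^ j * S * (Si * At * S) = Si * At ^ j * (S * Si) * At * S := by
          noncomm_ring
        rw [e2, hSSi, mul_one]
        noncomm_ring
  -- nonnegativity of At entries
  have hAtnn : ∀ i j, 0 ≤ At i j := by
    intro i j
    rw [hAt, hSi, Matrix.mul_diagonal, Matrix.diagonal_mul]
    exact mul_nonneg (mul_nonneg (inv_nonneg.2 (hsd i).le) (hnn i j)) (inv_nonneg.2 (hsd j).le)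
  have hMnn' : ∀ (p : ℕ) i j, 0 ≤ (At ^ p) i j := by
    intro p
    induction p with
    | zero => intro i j; by_cases h : i = j <;> simp [h, Matrix.one_apply]
    | succ p ih =>
        intro i j
        rw [pow_succ, Matrix.mul_apply]
        exact Finset.sum_nonneg fun x _ => mul_nonneg (ih i x) (hAtnn x j)
  have hMnn : ∀ i j, 0 ≤ (At ^ k) i j := hMnn' k
  -- symmetry of At^k
  have hSiT : Siᵀ = Si := by rw [hSi]; exact Matrix.diagonal_transpose _
  have hAtsym : At.IsSymm := by
    rw [Matrix.IsSymm, hAt, Matrix.transpose_mul, Matrix.transpose_mul, hSiT, hsym.eq,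
      Matrix.mul_assoc]
  have hMsym : ∀ i j, (At ^ k) i j = (At ^ k) j i := by
    intro i j
    have h := (hAtsym.pow k).eq
    calc (At ^ k) i j = ((At ^ k)ᵀ) j i := rfl
      _ = (At ^ k) j i := by rw [h]
  -- entries of P^k
  have hPk : ∀ i j, (P ^ k) i j = (Real.sqrt (d i))⁻¹ * (At ^ k) i j * Real.sqrt (d j) := by
    intro i j
    rw [hconj k, hS, Matrix.mul_diagonal, hSi, Matrix.diagonal_mul]
  -- key inequality
  have key : ∀ l m, 2 * (y l ⬝ᵥ (At ^ k).mulVec (y m)) ≤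
      y l ⬝ᵥ (P ^ k).mulVec (y m) + y m ⬝ᵥ (P ^ k).mulVec (y l) := by
    intro l m
    have expand : ∀ (M : Matrix (Fin n) (Fin n) ℝ) (u v : Fin n → ℝ),
        u ⬝ᵥ M.mulVec v = ∑ i, ∑ j, u i * M i j * v j := by
      intro M u v
      simp [dotProduct, Matrix.mulVec, Finset.mul_sum, mul_assoc]
    have hswap : (∑ i, ∑ j, y m i * (P ^ k) i j * y l j)
        = ∑ i, ∑ j, y m j * (P ^ k) j i * y l i := by rw [Finset.sum_comm]
    rw [expand, expand, expand, hswap]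
    simp only [← Finset.sum_add_distrib, Finset.mul_sum]
    refine Finset.sum_le_sum fun i _ => Finset.sum_le_sum fun j _ => ?_
    rw [hPk i j, hPk j i, hMsym j i]
    have h1 : (2:ℝ) ≤ (Real.sqrt (d i))⁻¹ * Real.sqrt (d j)
        + (Real.sqrt (d j))⁻¹ * Real.sqrt (d i) := by
      rw [inv_mul_eq_div, inv_mul_eq_div, div_add_div _ _ (hsd i).ne' (hsd j).ne',
        le_div_iff₀ (mul_pos (hsd i) (hsd j))]
      nlinarith [sq_nonneg (Real.sqrt (d i) - Real.sqrt (d j))]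
    have h2 : 0 ≤ y l i * (At ^ k) i j * y m j :=
      mul_nonneg (mul_nonneg (hynn l i) (hMnn i j)) (hynn m j)
    calc 2 * (y l i * (At ^ k) i j * y m j)
        = (y l i * (At ^ k) i j * y m j) * 2 := by ring
      _ ≤ (y l i * (At ^ k) i j * y m j) *
            ((Real.sqrt (d i))⁻¹ * Real.sqrt (d j) + (Real.sqrt (d j))⁻¹ * Real.sqrt (d i)) :=
          mul_le_mul_of_nonneg_left h1 h2
      _ = y l i * ((Real.sqrt (d i))⁻¹ * (At ^ k) i j * Real.sqrt (d j)) * y m j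
            + y m j * ((Real.sqrt (d j))⁻¹ * (At ^ k) i j * Real.sqrt (d i)) * y l i := by ring
  constructor
  · intro l m
    have hnum1 : R l * Pi l m = y l ⬝ᵥ (P ^ k).mulVec (y m) := by
      rw [hPi, mul_div_cancel₀ _ (hRpos l).ne']
    have hnum2 : R m * Pi m l = y m ⬝ᵥ (P ^ k).mulVec (y l) := by
      rw [hPi, mul_div_cancel₀ _ (hRpos m).ne']
    have hsq : Real.sqrt (R l * R m) > 0 :=
      Real.sqrt_pos.2 (mul_pos (hRpos l) (hRpos m))
    have hnum3 : Real.sqrt (R l * R m) * Pit l m = y l ⬝ᵥ (At ^ k).mulVec (y m) := by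
      rw [hPit, mul_div_cancel₀ _ hsq.ne']
    rw [ge_iff_le, hnum1, hnum2, mul_assoc, hnum3]
    exact key l m
  · intro l
    have h := key l l
    have hPll : Pi l l = (y l ⬝ᵥ (P ^ k).mulVec (y l)) / R l := hPi l l
    have hPitll : Pit l l = (y l ⬝ᵥ (At ^ k).mulVec (y l)) / R l := by
      rw [hPit, Real.sqrt_mul_self (hRpos l).le]
    rw [ge_iff_le, hPll, hPitll, div_le_div_iff_of_pos_right (hRpos l)]
    linarith
end
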